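/- If π: G → V is a bijective 1-cocycle (π(xy) = π(x) + Φ(x)π(y)) with coefficients in a G-module (V,Φ), then π⁻¹: V → G is a relative Rota-Baxter operator of weight 0, i.e., π⁻¹(u)π⁻¹(v) = π⁻¹(u + Φ(π⁻¹(u))v) for all u,v ∈ V. -/

import Mathlib

theorem cocycle_inverse_rrb {G V : Type*} [Group G] [AddCommGroup V]
    (Φ : G →* Multiplicative (AddAut V)) (π : G → V) (σ : V → G)
    (hleft : Function.LeftInverse σ π) (hright : Function.RightInverse σ π)
    (hcocycle : ∀ x y : G, π (x * y) = π x + Multiplicative.toAdd (Φ x) (π y)) :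
    ∀ u v : V, σ u * σ v = σ (u + Multiplicative.toAdd (Φ (σ u)) v) := by
  intro u v
  have : π (σ u * σ v) = u + Multiplicative.toAdd (Φ (σ u)) v := by
    rw [hcocycle, hright, hright]
  calc σ u * σ v = σ (π (σ u * σ v)) := (hleft _).symm
    _ = σ (u + Multiplicative.toAdd (Φ (σ u)) v) := by rw [this]
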